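/- Let G = (Ξ, Σ, Δ) be a grammar, X, Y ∈ Ξ, w ∈ Σ*, γ ∈ Δ*, and suppose X·Y ⇒^γ w is a k-index depth-first step sequence. Then there exist w_1, w_2 ∈ Σ* with w_1·w_2 = w and γ_1, γ_2 ∈ Δ* such that either (i) X ⇒^{γ_1} w_1 is a (k−1)-index depth-first derivation, Y ⇒^{γ_2} w_2 is a k-index depth-first derivation, and γ = γ_1·γ_2, or (ii) X ⇒^{γ_1} w_1 is a k-index depth-first derivation, Y ⇒^{γ_2} w_2 is a (k−1)-index depth-first derivation, and γ = γ_2·γ_1. -/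

import Mathlib

namespace Paper

/-- A word over nonterminals `N` and terminals `T`. -/
abbrev Word (N T : Type) := List (N ⊕ T)

/-- A production of a grammar. -/
abbrev CProd (N T : Type) := N × Word N T

/-- A grammar, given by its set of productions. -/
structure CFG (N T : Type) where
  prods : Set (CProd N T)

variable {N T : Type}

/-- number of occurrences of nonterminals in a word -/
def ntCount (u : Word N T) : ℕ := (u.filter (fun s => s.isLeft)).length

/-- number of occurrences of terminals in a word -/
def tCount (u : Word N T) : ℕ := (u.filter (fun s => s.isRight)).length

/-- the result of applying production `p` at position `j` of `u` -/
def applyProd (p : CProd N T) (j : ℕ) (u : Word N T) : Word N T :=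
  u.take j ++ p.2 ++ u.drop (j + 1)

/-- `KSeq G k u γjs v`: a step sequence from `u` to `v` applying the indicated
productions at the indicated positions, in which every word (including `u`, `v`)
has at most `k` occurrences of nonterminals (`k = ⊤` places no restriction). -/
inductive KSeq (G : CFG N T) (k : ℕ∞) : Word N T → List (CProd N T × ℕ) → Word N T → Prop
  | refl (u : Word N T) : (ntCount u : ℕ∞) ≤ k → KSeq G k u [] u
  | step {u v : Word N T} {p : CProd N T} {j : ℕ} {rest : List (CProd N T × ℕ)} :
      (ntCount u : ℕ∞) ≤ k → p ∈ G.prods → u[j]? = some (Sum.inl p.1) →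
      KSeq G k (applyProd p j u) rest v → KSeq G k u ((p, j) :: rest) v

/-- words annotated with the index of the step at which each symbol occurrence appeared -/
abbrev AWord (N T : Type) := List ((N ⊕ T) × ℕ)

def strip (u : AWord N T) : Word N T := u.map Prod.fst

def ntCountA (u : AWord N T) : ℕ := (u.filter (fun s => s.1.isLeft)).length

def applyProdA (p : CProd N T) (j m : ℕ) (u : AWord N T) : AWord N T :=
  u.take j ++ p.2.map (fun s => (s, m)) ++ u.drop (j + 1)

/-- the depth-first condition: position `j` carries a maximal first-appearance
index among the nonterminal occurrences of `u` -/
def dfOK (u : AWord N T) (j : ℕ) : Prop :=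
  ∀ (i : ℕ) x o, u[i]? = some (Sum.inl x, o) → ∀ s oj, u[j]? = some (s, oj) → o ≤ oj

/-- `DFSeq G k m u γjs v`: a `k`-index depth-first step sequence on annotated words,
where `m` is the index (in the whole sequence) of the current word `u`. -/
inductive DFSeq (G : CFG N T) (k : ℕ∞) : ℕ → AWord N T → List (CProd N T × ℕ) → AWord N T → Prop
  | refl (m : ℕ) (u : AWord N T) : (ntCountA u : ℕ∞) ≤ k → DFSeq G k m u [] u
  | step {m : ℕ} {u v : AWord N T} {p : CProd N T} {j o : ℕ} {rest : List (CProd N T × ℕ)} :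
      (ntCountA u : ℕ∞) ≤ k → p ∈ G.prods → u[j]? = some (Sum.inl p.1, o) →
      dfOK u j →
      DFSeq G k (m + 1) (applyProdA p j (m + 1) u) rest v →
      DFSeq G k m u ((p, j) :: rest) v

/-- `u ⇒^γ v` by a `k`-index step sequence (positions existentially quantified). -/
def CtrlSeq (G : CFG N T) (k : ℕ∞) (u : Word N T) (γ : List (CProd N T)) (v : Word N T) : Prop :=
  ∃ js : List ℕ, js.length = γ.length ∧ KSeq G k u (γ.zip js) v

/-- annotate a word as an initial word of a step sequence -/
def annot (u : Word N T) : AWord N T := u.map (fun s => (s, 0))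

/-- `u ⇒^γ v` by a `k`-index depth-first step sequence starting at `u`. -/
def DFCtrlFrom (G : CFG N T) (k : ℕ∞) (u : Word N T) (γ : List (CProd N T)) (v : Word N T) :
    Prop :=
  ∃ (js : List ℕ) (va : AWord N T),
    js.length = γ.length ∧ DFSeq G k 0 (annot u) (γ.zip js) va ∧ strip va = v

/-- embedding of terminal words -/
def tw (w : List T) : Word N T := w.map Sum.inr

/-- the sentential word `u Y v` where `u, v` are terminal and `Y` is an optional nonterminal -/
def sent (u : List T) (Y : Option N) (v : List T) : Word N T :=
  tw u ++ (Y.elim [] (fun y => [Sum.inl y])) ++ tw v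

/-- `L^{(k)}_{X,Y}(G) = { u·v | X ⇒* u Y v by a k-index step sequence }`;
`Y = none` stands for `ε`. -/
def LKY (G : CFG N T) (k : ℕ∞) (X : N) (Y : Option N) : Set (List T) :=
  {w | ∃ u v γ, w = u ++ v ∧ CtrlSeq G k [Sum.inl X] γ (sent u Y v)}

/-- `L_X(G)` -/
def Lang (G : CFG N T) (X : N) : Set (List T) := LKY G ⊤ X none

/-- `L^{(k)}_X(G)` -/
def LangK (G : CFG N T) (k : ℕ) (X : N) : Set (List T) := LKY G (k : ℕ∞) X none

/-- `Γ^{df(k)}_{X,Y}(G)`: control words of `k`-index depth-first step sequences `X ⇒^γ u Y v`. -/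
def GammaDF (G : CFG N T) (k : ℕ) (X : N) (Y : Option N) : Set (List (CProd N T)) :=
  {γ | ∃ u v : List T, DFCtrlFrom G (k : ℕ∞) [Sum.inl X] γ (sent u Y v)}

/-- `L̂_{X,Y}(Γ, G)` -/
def LHat (G : CFG N T) (Γ : Set (List (CProd N T))) (X : N) (Y : Option N) : Set (List T) :=
  {w | ∃ u v, w = u ++ v ∧ ∃ γ ∈ Γ, CtrlSeq G ⊤ [Sum.inl X] γ (sent u Y v)}

/-- the language of the bounded expression `w₁* ⋯ w_d*` -/
def BLang {α : Type} : List (List α) → Set (List α)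
  | [] => {[]}
  | w :: ws => {u | ∃ (n : ℕ) (v : List α), v ∈ BLang ws ∧ u = (List.replicate n w).flatten ++ v}

/-- the words of a bounded expression must be nonempty -/
def IsBExpr {α : Type} (ws : List (List α)) : Prop := ∀ w ∈ ws, w ≠ []

/-- the language of the letter-bounded expression `a₁* ⋯ a_d*` -/
def letterLang {α : Type} (as : List α) : Set (List α) := BLang (as.map (fun a => [a]))

/-- the language `a_i* ⋯ a_j*` (0-indexed segment of `as` from `i` to `j` inclusive) -/
def segLang {α : Type} (as : List α) (i j : ℕ) : Set (List α) :=
  letterLang ((as.drop i).take (j - i + 1))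

end Paper

namespace Paper

variable {N T : Type}

/-- ranked words over the nonterminals -/
abbrev RW (N : Type) := List (N × ℕ)

/-- the set of rank values is downward closed (equivalently, of the form `{0, …, m}`
when nonempty) -/
def contiguousRanks (q : RW N) : Prop := ∀ p ∈ q, ∀ j ≤ p.2, ∃ x : N, (x, j) ∈ q

/-- vertices of the graph `A^{df(k)}_G` -/
def IsVertex (k : ℕ) (q : RW N) : Prop :=
  q.length ≤ k ∧ contiguousRanks q ∧ List.Pairwise (· ≤ ·) (q.map Prod.snd)

/-- `w↓Ξ` : projection of a word to its nonterminals -/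
def ntProj (w : Word N T) : List N := w.filterMap Sum.getLeft?

open Classical in
/-- the rank given to the nonterminals produced by a step rewriting a nonterminal
of maximal rank `i`, where `uv` is the rest of the ranked word -/
noncomputable def newRank (uv : RW N) (i : ℕ) : ℕ :=
  if uv = [] then 0 else if ∀ p ∈ uv, p.2 ≠ i then i else i + 1

/-- the edge relation of the graph `A^{df(k)}_G` -/
def Edge (G : CFG N T) (k : ℕ) (q : RW N) (p : CProd N T) (q' : RW N) : Prop :=
  p ∈ G.prods ∧ IsVertex k q ∧ IsVertex k q' ∧
  ∃ (u v : RW N) (i : ℕ), q = u ++ [(p.1, i)] ++ v ∧ (∀ x ∈ q, x.2 ≤ i) ∧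
    q' = u ++ v ++ (ntProj p.2).map (fun X => (X, newRank (u ++ v) i))

/-- paths in a labeled graph, recording the sequence of edge labels -/
inductive GPath {V E : Type} (edge : V → E → V → Prop) : V → List E → V → Prop
  | refl (v : V) : GPath edge v [] v
  | step {v v' v'' : V} {e : E} {es : List E} :
      edge v e v' → GPath edge v' es v'' → GPath edge v (e :: es) v''

/-- paths recording the successive vertices as well -/
inductive VPath {V E : Type} (edge : V → E → V → Prop) : V → List (E × V) → Prop
  | refl (v : V) : VPath edge v []
  | step {v v' : V} {e : E} {rest : List (E × V)} :
      edge v e v' → VPath edge v' rest → VPath edge v ((e, v') :: rest)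

/-- endpoint of a path starting at `q` -/
def pend {V E : Type} (q : V) (π : List (E × V)) : V := (π.map Prod.snd).getLastD q

/-- a path is acyclic iff it visits no vertex twice -/
def AcyclicFrom {V E : Type} (q : V) (π : List (E × V)) : Prop :=
  (q :: π.map Prod.snd).Nodup

/-- `Decomp edge q pairs fin` asserts that the path obtained by concatenating, in order,
the segments of `pairs` (each an acyclic segment followed by a cycle) and `fin` is a valid
path from `q`, alternating acyclic segments `ς_j` and cycles `θ_j`. -/
def Decomp {V E : Type} (edge : V → E → V → Prop) :
    V → List (List (E × V) × List (E × V)) → List (E × V) → Prop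
  | q, [], fin => VPath edge q fin ∧ AcyclicFrom q fin
  | q, (σ, θ) :: rest, fin =>
      VPath edge q σ ∧ AcyclicFrom q σ ∧
      VPath edge (pend q σ) θ ∧ pend (pend q σ) θ = pend q σ ∧
      Decomp edge (pend q σ) rest fin

/-- `|γ|_a`: total number of occurrences of the terminal `a` in the right-hand
sides of the productions of the control word `γ` -/
def projCnt {A : Type} [DecidableEq A] (γ : List (CProd N A)) (a : A) : ℕ :=
  ((γ.map (fun p => p.2)).flatten.filterMap Sum.getRight?).count a

/-- `proj(γ) = a₁^{|γ|_{a₁}} ⋯ a_s^{|γ|_{a_s}}` -/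
def projW {A : Type} [DecidableEq A] (as : List A) (γ : List (CProd N A)) : List A :=
  (as.map (fun a => List.replicate (projCnt γ a) a)).flatten

end Paper

namespace Paper

variable {N T : Type}

/-- a grammar is in 2-normal form -/
def TwoNF (G : CFG N T) : Prop := ∀ p ∈ G.prods, p.2.length ≤ 2

/-- states of the automaton/grammar `G^b`: `(s, i)` encodes `q^{(s+1)}_{i+1}`,
i.e. position `i` (0-indexed) inside the block `s` (0-indexed) -/
abbrev QB : Type := ℕ × ℕ

/-- `ℓ_s`: length of the `s`-th word of the bounded expression -/
def lenB (ws : List (List T)) (s : ℕ) : ℕ := (ws.getD s []).length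

/-- the `i`-th letter of the `s`-th word -/
def letterB (ws : List (List T)) (s i : ℕ) : Option T := (ws.getD s [])[i]?

/-- the productions of the grammar `G^b` generating the bounded expression `b` -/
def DeltaB (ws : List (List T)) : Set (CProd QB T) :=
  {p | (∃ s i a, s < ws.length ∧ i + 1 < lenB ws s ∧ letterB ws s i = some a ∧
          p = ((s, i), [Sum.inr a, Sum.inl (s, i + 1)]))
     ∨ (∃ s s' a, s ≤ s' ∧ s' < ws.length ∧
          letterB ws s (lenB ws s - 1) = some a ∧
          p = ((s, lenB ws s - 1), [Sum.inr a, Sum.inl (s', 0)]))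
     ∨ (∃ s, s < ws.length ∧ p = ((s, 0), ([] : Word QB T)))}

/-- the grammar `G^b` -/
def GB (ws : List (List T)) : CFG QB T := ⟨DeltaB ws⟩

/-- nonterminals `[q X q']` of the product grammar `G^∩` -/
abbrev NI (N : Type) : Type := QB × N × QB

/-- `q ∈ Ξ^b` -/
def ValidQ (ws : List (List T)) (q : QB) : Prop :=
  q.1 < ws.length ∧ q.2 < lenB ws q.1

/-- `[q X q'] ∈ Ξ^∩`: both states valid and blocks in order -/
def ValidNI (ws : List (List T)) (n : NI N) : Prop :=
  ValidQ ws n.1 ∧ ValidQ ws n.2.2 ∧ n.1.1 ≤ n.2.2.1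

/-- `q ⇒* w·q'` in `G^b` -/
def DerB (ws : List (List T)) (q : QB) (w : List T) (q' : QB) : Prop :=
  ∃ γ, CtrlSeq (GB ws) ⊤ [Sum.inl q] γ (tw w ++ [Sum.inl q'])

/-- the productions `Δ^∩` of the product grammar `G^∩` -/
def DeltaI (G : CFG N T) (ws : List (List T)) : Set (CProd (NI N) T) :=
  {pp | ∃ (q q' : QB) (X : N), ValidNI ws (q, X, q') ∧
     ((∃ w : List T, (X, tw w) ∈ G.prods ∧ DerB ws q w q' ∧
         pp = ((q, X, q'), tw w)) ∨
      (∃ Y : N, (X, [Sum.inl Y]) ∈ G.prods ∧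
         pp = ((q, X, q'), [Sum.inl ((q, Y, q') : NI N)])) ∨
      (∃ (a : T) (Y : N) (qm : QB), (X, [Sum.inr a, Sum.inl Y]) ∈ G.prods ∧
         ((q, [Sum.inr a, Sum.inl qm]) : CProd QB T) ∈ DeltaB ws ∧ ValidNI ws (qm, Y, q') ∧
         pp = ((q, X, q'), [Sum.inr a, Sum.inl ((qm, Y, q') : NI N)])) ∨
      (∃ (a : T) (Y : N) (qm : QB), (X, [Sum.inl Y, Sum.inr a]) ∈ G.prods ∧
         ((qm, [Sum.inr a, Sum.inl q']) : CProd QB T) ∈ DeltaB ws ∧ ValidNI ws (q, Y, qm) ∧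
         pp = ((q, X, q'), [Sum.inl ((q, Y, qm) : NI N), Sum.inr a])) ∨
      (∃ (Y Z : N) (qm : QB), (X, [Sum.inl Y, Sum.inl Z]) ∈ G.prods ∧
         ValidNI ws (q, Y, qm) ∧ ValidNI ws (qm, Z, q') ∧
         pp = ((q, X, q'), [Sum.inl ((q, Y, qm) : NI N), Sum.inl ((qm, Z, q') : NI N)])))}

/-- the product grammar `G^∩` -/
def GI (G : CFG N T) (ws : List (List T)) : CFG (NI N) T := ⟨DeltaI G ws⟩

/-- `ζ` on symbols -/
def zetaS : (NI N ⊕ T) → (N ⊕ T) := Sum.map (fun n => n.2.1) id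

/-- `ζ` on productions -/
def zetaP (p : CProd (NI N) T) : CProd N T := (p.1.2.1, p.2.map zetaS)

/-- `ζ` on control words -/
def zetaC (γ : List (CProd (NI N) T)) : List (CProd N T) := γ.map zetaP

/-- the intermediate state of the (unique, shortest) two-step run of `G^b` from the
left state of `h` to its right state; when the first step wraps, the least possible
intermediate block is chosen -/
noncomputable def iotaMid (ws : List (List T)) (h : NI N) (a b : T) : QB :=
  if h.1.2 + 1 < lenB ws h.1.1 then (h.1.1, h.1.2 + 1)
  else (sInf {y : ℕ | (((h.1.1, h.1.2), [Sum.inr a, Sum.inl ((y, 0) : QB)]) : CProd QB T) ∈ DeltaB ws ∧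
                (((y, 0), [Sum.inr b, Sum.inl (h.2.2 : QB)]) : CProd QB T) ∈ DeltaB ws}, 0)

/-- `ι` on right-hand sides: relabels terminals by the indices (0-indexed) of the
blocks of `b` completed by the corresponding moves of `G^b`; `h` is the head of the
production -/
noncomputable def iotaRhs (ws : List (List T)) (h : NI N) :
    Word (NI N) T → Word (NI N) ℕ
  | [] => []
  | [Sum.inr _] => if h.2.2.2 = 0 then [Sum.inr h.1.1] else []
  | [Sum.inr a, Sum.inr b] =>
      (if (iotaMid ws h a b).2 = 0 then [Sum.inr h.1.1] else []) ++
      (if h.2.2.2 = 0 then [Sum.inr (iotaMid ws h a b).1] else [])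
  | [Sum.inr _, Sum.inl m] => (if m.1.2 = 0 then [Sum.inr h.1.1] else []) ++ [Sum.inl m]
  | [Sum.inl m, Sum.inr _] => [Sum.inl m] ++ (if h.2.2.2 = 0 then [Sum.inr m.2.2.1] else [])
  | other => other.map (Sum.map id (fun _ => 0))

/-- the map `ι : Δ^∩ → Δ^⋈` -/
noncomputable def iota (ws : List (List T)) (p : CProd (NI N) T) : CProd (NI N) ℕ :=
  (p.1, iotaRhs ws p.1 p.2)

/-- the grammar `G^⋈`, whose terminals are the (0-indexed) letters `a₁, …, a_d`
represented by natural numbers -/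
noncomputable def GBow (G : CFG N T) (ws : List (List T)) : CFG (NI N) ℕ :=
  ⟨iota ws '' DeltaI G ws⟩

end Paper

namespace Paper

variable {N A : Type}

/-- `Ξ̂`: nonterminals producing some word starting with `a₁` and some word ending
with `a_d` -/
def XiHat (G : CFG N A) (a1 ad : A) : Set N :=
  {Y | (∃ w ∈ Lang G Y, ∃ v, w = a1 :: v) ∧ (∃ w ∈ Lang G Y, ∃ v, w = v ++ [ad])}

/-- the grammar `G^♯` (here `S = Ξ̂`, and `Ξ̌` is its complement) -/
def GSharp (G : CFG N A) (S : Set N) : CFG N A :=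
  ⟨{p | p ∈ G.prods ∧ p.1 ∉ S} ∪
   {p | p ∈ G.prods ∧ p.1 ∈ S ∧ ∃ (u : Word N A) (Xr : N) (v : Word N A),
      Xr ∈ S ∧ p.2 = u ++ [Sum.inl Xr] ++ v}⟩

/-- the grammar `G_{i,w}` for a pivot production `piv` (here `S = Ξ̂`) -/
def GPivot (G : CFG N A) (S : Set N) (piv : CProd N A) : CFG N A :=
  ⟨{p | p ∈ G.prods ∧ p.1 ∉ S} ∪ {piv}⟩

/-- `G` is reduced for `X` -/
def Reduced (G : CFG N A) (X : N) : Prop :=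
  ∀ Y : N, Y ≠ X → (LKY G ⊤ X (some Y)).Nonempty ∧ (Lang G Y).Nonempty

/-- `a₁* ⋯ a_d*` (given by the list `as`) is the minimal strict letter-bounded
expression for `L_X(G)` -/
def MinimalLB (G : CFG N A) (X : N) (as : List A) : Prop :=
  Lang G X ⊆ letterLang as ∧ ∀ i < as.length, ¬ (Lang G X ⊆ letterLang (as.eraseIdx i))

/-- a symbol of `A ∪ {ε}` as a word -/
def optT (a : Option A) : Word N A := a.elim [] (fun x => [Sum.inr x])

/-- a symbol of `Ξ ∪ {ε}` as a word -/
def optN (y : Option N) : Word N A := y.elim [] (fun x => [Sum.inl x])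

/-- `y ⇒^γ u_y` is a (possibly empty) `k`-index depth-first derivation, where
`y ∈ Ξ ∪ {ε}`; for `y = ε` the derivation is empty -/
def optDFDer (H : CFG N A) (k : ℕ) (y : Option N) (γ : List (CProd N A)) : Prop :=
  match y with
  | some Y => ∃ w : List A, DFCtrlFrom H (k : ℕ∞) [Sum.inl Y] γ (tw w)
  | none => γ = []

/-- the grammar `G_k` with productions `X_i → X_{i-1} X_{i-1}` (1 ≤ i ≤ k) and `X_0 → a` -/
def Gk (k : ℕ) : CFG ℕ Unit :=
  ⟨{p | (∃ i, 1 ≤ i ∧ i ≤ k ∧ p = (i, [Sum.inl (i - 1), Sum.inl (i - 1)])) ∨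
        p = (0, [Sum.inr ()])}⟩

end Paper

namespace Paper

variable {N T : Type}

lemma zip_fst_snd {α β : Type*} (L : List (α × β)) : (L.map Prod.fst).zip (L.map Prod.snd) = L := by
  induction L with
  | nil => rfl
  | cons a l ih => simp [ih]

def shiftA (c : ℕ) (u : AWord N T) : AWord N T := u.map (fun s => (s.1, s.2 - c))

@[simp] lemma strip_shiftA (c : ℕ) (u : AWord N T) : strip (shiftA c u) = strip u := by
  simp [strip, shiftA, List.map_map, Function.comp]

lemma ntCountA_append (u v : AWord N T) : ntCountA (u ++ v) = ntCountA u + ntCountA v := by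
  simp [ntCountA, List.filter_append]

@[simp] lemma ntCountA_shiftA (c : ℕ) (u : AWord N T) : ntCountA (shiftA c u) = ntCountA u := by
  simp [ntCountA, shiftA, List.filter_map, Function.comp_def]

lemma allT_of_ntCountA_eq_zero {u : AWord N T} (h : ntCountA u = 0) :
    ∀ s ∈ u, s.1.isLeft = false := by
  intro s hs
  have := List.filter_eq_nil_iff.mp (List.length_eq_zero_iff.mp h) s hs
  simpa using this

lemma ntCountA_eq_zero {u : AWord N T} (h : ∀ s ∈ u, s.1.isLeft = false) : ntCountA u = 0 := by
  rw [ntCountA, List.length_eq_zero_iff, List.filter_eq_nil_iff]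
  intro a ha; simp [h a ha]

lemma ntCountA_strip (u : AWord N T) : ntCountA u = ntCount (strip u) := by
  simp [ntCountA, ntCount, strip, List.filter_map, Function.comp_def]

@[simp] lemma ntCount_tw (w : List T) : ntCount (tw w : Word N T) = 0 := by
  simp [ntCount, tw, List.filter_map, Function.comp_def]

lemma exists_tw : ∀ (u : AWord N T), ntCountA u = 0 → ∃ w : List T, strip u = tw w
  | [], _ => ⟨[], rfl⟩
  | (s, i) :: u, h => by
    match s with
    | Sum.inl x => simp [ntCountA, List.filter_cons] at h
    | Sum.inr a =>
      have h2 : ntCountA u = 0 := by simpa [ntCountA, List.filter_cons] using h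
      obtain ⟨w, hw⟩ := exists_tw u h2
      exact ⟨a :: w, by simp [strip, tw] at hw ⊢; exact hw⟩

lemma tw_injective : Function.Injective (tw : List T → Word N T) :=
  List.map_injective_iff.mpr (fun _ _ h => Sum.inr.inj h)

lemma applyProdA_append_left (p : CProd N T) (j m : ℕ) (u c : AWord N T) (h : j < u.length) :
    applyProdA p j m (u ++ c) = applyProdA p j m u ++ c := by
  unfold applyProdA
  rw [List.take_append_of_le_length (le_of_lt h), List.drop_append]
  have h0 : j + 1 - u.length = 0 := by omega
  rw [h0]
  simp

lemma applyProdA_cons (p : CProd N T) (j m : ℕ) (e : (N ⊕ T) × ℕ) (u : AWord N T) :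
    applyProdA p (j+1) m (e :: u) = e :: applyProdA p j m u := by
  simp [applyProdA]

lemma applyProdA_append_right (p : CProd N T) (j m : ℕ) (c u : AWord N T) :
    applyProdA p (c.length + j) m (c ++ u) = c ++ applyProdA p j m u := by
  induction c with
  | nil => simp
  | cons e c ih =>
    have h : (e :: c).length + j = (c.length + j) + 1 := by simp; omega
    rw [h, List.cons_append, applyProdA_cons, ih, List.cons_append]

lemma shiftA_applyProdA (p : CProd N T) (j m c : ℕ) (hc : c ≤ m) (u : AWord N T) :
    shiftA c (applyProdA p j (m+1) u) = applyProdA p j (m - c + 1) (shiftA c u) := by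
  have hmid : (p.2.map (fun s => (s, m+1))).map (fun s : (N ⊕ T) × ℕ => (s.1, s.2 - c))
      = p.2.map (fun s => (s, m - c + 1)) := by
    rw [List.map_map]
    congr 1
    funext s
    simp [Function.comp]
    omega
  unfold applyProdA shiftA
  rw [List.map_append, List.map_append, hmid, List.map_take, List.map_drop]

lemma lt_of_get?_eq_some {α : Type*} {l : List α} {n : ℕ} {a : α} (h : l[n]? = some a) :
    n < l.length := by
  by_contra hc
  push_neg at hc
  rw [List.getElem?_eq_none hc] at h
  simp at h

lemma phase1R (G : CFG N T) (k : ℕ) (Y : N) :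
    ∀ (γjs : List (CProd N T × ℕ)) (u' va : AWord N T) (m : ℕ),
    DFSeq G (k : ℕ∞) m (u' ++ [(Sum.inl Y, 0)]) γjs va →
    (∀ x o, (Sum.inl x, o) ∈ u' → 1 ≤ o) →
    ntCountA va = 0 →
    ∃ γ1 γ2 wa, γjs = γ1 ++ γ2 ∧
      DFSeq G ((k - 1 : ℕ) : ℕ∞) m u' γ1 wa ∧
      ntCountA wa = 0 ∧
      DFSeq G (k : ℕ∞) (m + γ1.length) (wa ++ [(Sum.inl Y, 0)]) γ2 va := by
  intro γjs
  induction γjs with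
  | nil =>
    intro u' va m h hinv hva
    exfalso
    cases h with
    | refl _ hcnt =>
      rw [ntCountA_append] at hva
      simp [ntCountA] at hva
  | cons pj rest ih =>
    intro u' va m h hinv hva
    by_cases hz : ntCountA u' = 0
    · exact ⟨[], pj :: rest, u', rfl, DFSeq.refl m u' (by simp [hz]), hz, by simpa using h⟩
    · obtain ⟨p, j⟩ := pj
      cases h with
      | step hcnt hp hget hdf htail =>
        rename_i o
        have hex : ∃ (i : ℕ) (x : N) (oi : ℕ), u'[i]? = some (Sum.inl x, oi) ∧ 1 ≤ oi := by
          have h1 : ∃ s ∈ u', s.1.isLeft = true := by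
            by_contra hc
            push_neg at hc
            exact hz (ntCountA_eq_zero (by intro a ha; simpa using hc a ha))
          obtain ⟨⟨s, oi⟩, hsmem, hs⟩ := h1
          obtain ⟨x, rfl⟩ : ∃ x, s = Sum.inl x := by
            cases s with
            | inl x => exact ⟨x, rfl⟩
            | inr a => simp at hs
          obtain ⟨i, hi⟩ := List.getElem?_of_mem hsmem
          exact ⟨i, x, oi, hi, hinv x oi hsmem⟩
        have hj : j < u'.length := by
          rcases Nat.lt_or_ge j u'.length with h1 | h1
          · exact h1
          · exfalso
            obtain ⟨i, x, oi, hi, hoi⟩ := hex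
            have hiu : i < u'.length := lt_of_get?_eq_some hi
            have hgetj : ([(Sum.inl Y, 0)] : AWord N T)[j - u'.length]?
                = some (Sum.inl p.1, o) := by
              rw [← List.getElem?_append_right h1]; exact hget
            have ho0 : o = 0 := by
              rcases e : j - u'.length with _ | n
              · rw [e] at hgetj
                simp at hgetj
                omega
              · rw [e] at hgetj; simp at hgetj
            have hle := hdf i x oi (by rw [List.getElem?_append_left hiu]; exact hi) (Sum.inl p.1) o hget
            omega
        have hget' : u'[j]? = some (Sum.inl p.1, o) := by
          rw [List.getElem?_append_left hj] at hget; exact hget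
        have hdf' : dfOK u' j := by
          intro i x oi hi s oj hjget
          have hiu : i < u'.length := lt_of_get?_eq_some hi
          exact hdf i x oi (by rw [List.getElem?_append_left hiu]; exact hi) s oj
            (by rw [List.getElem?_append_left hj]; exact hjget)
        have hc1 : ntCountA u' + 1 ≤ k := by
          rw [ntCountA_append] at hcnt
          have h1 : ntCountA ([(Sum.inl Y, 0)] : AWord N T) = 1 := by simp [ntCountA, List.filter_cons]
          rw [h1] at hcnt
          exact_mod_cast hcnt
        have hc2 : (ntCountA u' : ℕ∞) ≤ ((k - 1 : ℕ) : ℕ∞) := by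
          exact_mod_cast (by omega : ntCountA u' ≤ k - 1)
        rw [applyProdA_append_left p j (m+1) u' _ hj] at htail
        have hinv' : ∀ x oi, (Sum.inl x, oi) ∈ applyProdA p j (m+1) u' → 1 ≤ oi := by
          intro x oi hmem
          unfold applyProdA at hmem
          rcases List.mem_append.mp hmem with hmem | hmem
          · rcases List.mem_append.mp hmem with hmem | hmem
            · exact hinv x oi (List.take_subset _ _ hmem)
            · obtain ⟨s, hs, h2⟩ := List.mem_map.mp hmem
              have := congrArg Prod.snd h2
              simp at this
              omega
          · exact hinv x oi (List.drop_subset _ _ hmem)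
        obtain ⟨γ1, γ2, wa, hsplit, hseq1, hwa, hseq2⟩ :=
          ih (applyProdA p j (m+1) u') va (m+1) htail hinv' hva
        refine ⟨(p, j) :: γ1, γ2, wa, by simp [hsplit],
          DFSeq.step hc2 hp hget' hdf' hseq1, hwa, ?_⟩
        have hlen : m + ((p, j) :: γ1).length = (m + 1) + γ1.length := by simp; omega
        rw [hlen]; exact hseq2

lemma exists_nt_get {u : AWord N T} (hz : ntCountA u ≠ 0)
    (hinv : ∀ x o, (Sum.inl x, o) ∈ u → 1 ≤ o) :
    ∃ (i : ℕ) (x : N) (oi : ℕ), u[i]? = some (Sum.inl x, oi) ∧ 1 ≤ oi := by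
  have h1 : ∃ s ∈ u, s.1.isLeft = true := by
    by_contra hc
    push_neg at hc
    exact hz (ntCountA_eq_zero (by intro a ha; simpa using hc a ha))
  obtain ⟨⟨s, oi⟩, hsmem, hs⟩ := h1
  obtain ⟨x, rfl⟩ : ∃ x, s = Sum.inl x := by
    cases s with
    | inl x => exact ⟨x, rfl⟩
    | inr a => simp at hs
  obtain ⟨i, hi⟩ := List.getElem?_of_mem hsmem
  exact ⟨i, x, oi, hi, hinv x oi hsmem⟩

lemma inv_applyProdA {u : AWord N T} (p : CProd N T) (j m : ℕ)
    (hinv : ∀ x o, (Sum.inl x, o) ∈ u → 1 ≤ o) :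
    ∀ x oi, (Sum.inl x, oi) ∈ applyProdA p j (m+1) u → 1 ≤ oi := by
  intro x oi hmem
  unfold applyProdA at hmem
  rcases List.mem_append.mp hmem with hmem | hmem
  · rcases List.mem_append.mp hmem with hmem | hmem
    · exact hinv x oi (List.take_subset _ _ hmem)
    · obtain ⟨s, hs, h2⟩ := List.mem_map.mp hmem
      have := congrArg Prod.snd h2
      simp at this
      omega
  · exact hinv x oi (List.drop_subset _ _ hmem)

lemma phase1L (G : CFG N T) (k : ℕ) (X : N) :
    ∀ (γjs : List (CProd N T × ℕ)) (uY va : AWord N T) (m : ℕ),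
    DFSeq G (k : ℕ∞) m ((Sum.inl X, 0) :: uY) γjs va →
    (∀ x o, (Sum.inl x, o) ∈ uY → 1 ≤ o) →
    ntCountA va = 0 →
    ∃ γ1 γ2 wa, γjs = γ1 ++ γ2 ∧
      DFSeq G ((k - 1 : ℕ) : ℕ∞) m uY (γ1.map (fun pj => (pj.1, pj.2 - 1))) wa ∧
      ntCountA wa = 0 ∧
      DFSeq G (k : ℕ∞) (m + γ1.length) ((Sum.inl X, 0) :: wa) γ2 va := by
  intro γjs
  induction γjs with
  | nil =>
    intro uY va m h hinv hva
    exfalso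
    cases h with
    | refl _ hcnt => simp [ntCountA, List.filter_cons] at hva
  | cons pj rest ih =>
    intro uY va m h hinv hva
    by_cases hz : ntCountA uY = 0
    · exact ⟨[], pj :: rest, uY, rfl, DFSeq.refl m uY (by simp [hz]), hz, by simpa using h⟩
    · obtain ⟨p, j⟩ := pj
      cases h with
      | step hcnt hp hget hdf htail =>
        rename_i o
        obtain ⟨j', rfl⟩ : ∃ j', j = j' + 1 := by
          cases j with
          | zero =>
            exfalso
            obtain ⟨i, x, oi, hi, hoi⟩ := exists_nt_get hz hinv
            have hget0 : ((Sum.inl X, 0) :: uY)[0]? = some (Sum.inl X, 0) := rfl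
            have := hdf (i+1) x oi (by simpa using hi) (Sum.inl X) 0 hget0
            omega
          | succ j' => exact ⟨j', rfl⟩
        have hget' : uY[j']? = some (Sum.inl p.1, o) := by simpa using hget
        have hdf' : dfOK uY j' := by
          intro i x oi hi s oj hjget
          exact hdf (i+1) x oi (by simpa using hi) s oj (by simpa using hjget)
        have hc1 : ntCountA uY + 1 ≤ k := by
          have h1 : ntCountA ((Sum.inl X, 0) :: uY) = ntCountA uY + 1 := by
            simp [ntCountA, List.filter_cons]
          rw [h1] at hcnt
          exact_mod_cast hcnt
        have hc2 : (ntCountA uY : ℕ∞) ≤ ((k - 1 : ℕ) : ℕ∞) := by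
          exact_mod_cast (by omega : ntCountA uY ≤ k - 1)
        rw [applyProdA_cons] at htail
        obtain ⟨γ1, γ2, wa, hsplit, hseq1, hwa, hseq2⟩ :=
          ih _ va (m+1) htail (inv_applyProdA p j' m hinv) hva
        refine ⟨(p, j'+1) :: γ1, γ2, wa, by simp [hsplit], ?_, hwa, ?_⟩
        · have hmap : ((p, j'+1) :: γ1).map (fun pj => (pj.1, pj.2 - 1))
              = (p, j') :: γ1.map (fun pj => (pj.1, pj.2 - 1)) := by simp
          rw [hmap]
          exact DFSeq.step hc2 hp hget' hdf' hseq1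
        · have hlen : m + ((p, j'+1) :: γ1).length = (m + 1) + γ1.length := by simp; omega
          rw [hlen]; exact hseq2

lemma get?_mid (ta uM tb : AWord N T) {i : ℕ} {s : (N ⊕ T) × ℕ} (h : uM[i]? = some s) :
    ((ta ++ uM) ++ tb)[ta.length + i]? = some s := by
  have hiu : i < uM.length := lt_of_get?_eq_some h
  rw [List.append_assoc, List.getElem?_append_right (Nat.le_add_right _ _)]
  have e : ta.length + i - ta.length = i := by omega
  rw [e, List.getElem?_append_left hiu]
  exact h

lemma phase2 (G : CFG N T) (kk : ℕ∞) (ta tb : AWord N T)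
    (hta : ∀ s ∈ ta, (Prod.fst s).isLeft = false)
    (htb : ∀ s ∈ tb, (Prod.fst s).isLeft = false) (m0 : ℕ) :
    ∀ (γjs : List (CProd N T × ℕ)) (uM va : AWord N T) (m : ℕ),
    DFSeq G kk m (ta ++ uM ++ tb) γjs va → m0 ≤ m →
    ∃ vM, va = ta ++ vM ++ tb ∧
      DFSeq G kk (m - m0) (shiftA m0 uM)
        (γjs.map (fun pj => (pj.1, pj.2 - ta.length))) (shiftA m0 vM) := by
  intro γjs
  induction γjs with
  | nil =>
    intro uM va m h hm0
    cases h with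
    | refl _ _ hcnt =>
      refine ⟨uM, rfl, DFSeq.refl _ _ ?_⟩
      rw [ntCountA_shiftA]
      rw [ntCountA_append, ntCountA_append, ntCountA_eq_zero hta, ntCountA_eq_zero htb] at hcnt
      simpa using hcnt
  | cons pj rest ih =>
    intro uM va m h hm0
    obtain ⟨p, j⟩ := pj
    cases h with
    | step hcnt hp hget hdf htail =>
      rename_i o
      have hjta : ta.length ≤ j := by
        by_contra hc
        push_neg at hc
        have h1 : ta[j]? = some (Sum.inl p.1, o) := by
          have h2 : j < (ta ++ uM).length := by simp; omega
          rw [List.getElem?_append_left h2, List.getElem?_append_left hc] at hget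
          exact hget
        have := hta _ (List.mem_of_getElem? h1)
        simp at this
      have hjlt : j < ta.length + uM.length := by
        by_contra hc
        push_neg at hc
        have h2 : (ta ++ uM).length ≤ j := by simp; omega
        rw [List.getElem?_append_right h2] at hget
        have := htb _ (List.mem_of_getElem? hget)
        simp at this
      obtain ⟨j', rfl⟩ : ∃ j', j = ta.length + j' := ⟨j - ta.length, by omega⟩
      have hj' : j' < uM.length := by omega
      have hgetM : uM[j']? = some (Sum.inl p.1, o) := by
        rw [List.append_assoc,
          List.getElem?_append_right (Nat.le_add_right _ _)] at hget
        have e : ta.length + j' - ta.length = j' := by omega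
        rw [e, List.getElem?_append_left hj'] at hget
        exact hget
      have hgetS : (shiftA m0 uM)[j']? = some (Sum.inl p.1, o - m0) := by
        rw [shiftA, List.getElem?_map, hgetM]
        rfl
      have hdfS : dfOK (shiftA m0 uM) j' := by
        intro i x oi hi s oj hjget
        rw [shiftA, List.getElem?_map, Option.map_eq_some_iff] at hi hjget
        obtain ⟨⟨s1, o1⟩, h1, h1e⟩ := hi
        obtain ⟨⟨s2, o2⟩, h2, h2e⟩ := hjget
        injection h1e with h1a h1b
        injection h2e with h2a h2b
        subst h1a
        have := hdf (ta.length + i) x o1 (get?_mid ta uM tb h1) s2 o2 (get?_mid ta uM tb h2)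
        omega
      have hcntS : (ntCountA (shiftA m0 uM) : ℕ∞) ≤ kk := by
        rw [ntCountA_shiftA]
        rw [ntCountA_append, ntCountA_append, ntCountA_eq_zero hta, ntCountA_eq_zero htb] at hcnt
        simpa using hcnt
      have happ : applyProdA p (ta.length + j') (m+1) ((ta ++ uM) ++ tb)
          = (ta ++ applyProdA p j' (m+1) uM) ++ tb := by
        rw [List.append_assoc, applyProdA_append_right,
          applyProdA_append_left p j' (m+1) uM tb hj', ← List.append_assoc]
      rw [happ] at htail
      obtain ⟨vM, hva, hseq⟩ := ih (applyProdA p j' (m+1) uM) va (m+1) htail (by omega)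
      refine ⟨vM, hva, ?_⟩
      have hmap : ((p, ta.length + j') :: rest).map (fun pj => (pj.1, pj.2 - ta.length))
          = (p, j') :: rest.map (fun pj => (pj.1, pj.2 - ta.length)) := by simp
      rw [hmap]
      refine DFSeq.step (o := o - m0) hcntS hp hgetS hdfS ?_
      rw [← shiftA_applyProdA p j' m m0 hm0 uM,
        (by omega : m - m0 + 1 = m + 1 - m0)]
      exact hseq

lemma strip_append (u v : AWord N T) : strip (u ++ v) = strip u ++ strip v :=
  List.map_append

lemma tw_append (u v : List T) : (tw (u ++ v) : Word N T) = tw u ++ tw v :=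
  List.map_append

/-- Lemma 5: if `X·Y ⇒^γ w` is a `k`-index depth-first step sequence,
then `w = w₁·w₂` and either `γ = γ₁·γ₂` with `X ⇒^{γ₁} w₁` a `(k-1)`-index and
`Y ⇒^{γ₂} w₂` a `k`-index depth-first derivation, or symmetrically `γ = γ₂·γ₁`. -/
theorem split_lemma {N T : Type} (G : CFG N T) (X Y : N) (w : List T)
    (γ : List (CProd N T)) (k : ℕ)
    (h : DFCtrlFrom G (k : ℕ∞) [Sum.inl X, Sum.inl Y] γ (tw w)) :
    ∃ (w1 w2 : List T) (γ1 γ2 : List (CProd N T)), w = w1 ++ w2 ∧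
      ((DFCtrlFrom G ((k - 1 : ℕ) : ℕ∞) [Sum.inl X] γ1 (tw w1) ∧
        DFCtrlFrom G (k : ℕ∞) [Sum.inl Y] γ2 (tw w2) ∧ γ = γ1 ++ γ2) ∨
       (DFCtrlFrom G (k : ℕ∞) [Sum.inl X] γ1 (tw w1) ∧
        DFCtrlFrom G ((k - 1 : ℕ) : ℕ∞) [Sum.inl Y] γ2 (tw w2) ∧ γ = γ2 ++ γ1)) := by

  obtain ⟨js, va, hlen, hseq, hstrip⟩ := h
  have hγ : γ = (γ.zip js).map Prod.fst :=
    (List.map_fst_zip (le_of_eq hlen.symm)).symm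
  have hva : ntCountA va = 0 := by
    rw [ntCountA_strip, hstrip, ntCount_tw]
  have hannot : annot ([Sum.inl X, Sum.inl Y] : Word N T)
      = [(Sum.inl X, 0), (Sum.inl Y, 0)] := rfl
  rw [hannot] at hseq
  generalize hLg : γ.zip js = L at hseq hγ
  cases hseq with
  | refl _ _ hcnt =>
    exfalso
    simp [ntCountA] at hva
  | step hcnt hp hget hdf htail =>
    rename_i p j o rest
    obtain ⟨p1, rhs⟩ := p
    have hk2 : 2 ≤ k := by
      have h2 : ntCountA ([(Sum.inl X, 0), (Sum.inl Y, 0)] : AWord N T) = 2 := by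
        simp [ntCountA, List.filter_cons]
      rw [h2] at hcnt
      exact_mod_cast hcnt
    rcases j with _ | _ | n
    · -- j = 0 : first step rewrites X
      simp only [List.getElem?_cons_zero] at hget
      injection hget with h0
      injection h0 with ha hb
      injection ha with ha'
      subst ha'
      cases hb
      have htail' : DFSeq G (k:ℕ∞) 1
          ((rhs.map (fun s => (s, 1))) ++ [(Sum.inl Y, 0)]) rest va := by
        have e : applyProdA (X, rhs) 0 1 [(Sum.inl X, 0), (Sum.inl Y, 0)]
            = (rhs.map (fun s => (s, 1))) ++ [(Sum.inl Y, 0)] := by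
          simp [applyProdA]
        rw [← e]
        exact htail
      have hinv0 : ∀ x o2, (Sum.inl x, o2) ∈ rhs.map (fun s => (s, (1:ℕ))) → 1 ≤ o2 := by
        intro x o2 hm
        obtain ⟨s, _, h2⟩ := List.mem_map.mp hm
        have := congrArg Prod.snd h2
        simp at this
        omega
      obtain ⟨γ1, γ2, wa, hsplit, hseq1, hwa, hseq2⟩ :=
        phase1R G k Y rest _ va 1 htail' hinv0 hva
      have hstep0 : DFSeq G ((k-1:ℕ):ℕ∞) 0 [(Sum.inl X, 0)] (((X, rhs), 0) :: γ1) wa := by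
        refine DFSeq.step (o := 0) ?_ hp rfl ?_ ?_
        · have e1 : ntCountA ([(Sum.inl X, 0)] : AWord N T) = 1 := by simp [ntCountA, List.filter_cons]
          rw [e1]
          exact_mod_cast (by omega : 1 ≤ k - 1)
        · intro i x oi hi s oj hj
          rcases i with _ | i
          · simp at hi hj
            omega
          · simp at hi
        · have e2 : applyProdA (X, rhs) 0 1 [(Sum.inl X, 0)]
              = rhs.map (fun s => (s, 1)) := by simp [applyProdA]
          rw [e2]
          exact hseq1
      have hseq2' : DFSeq G (k:ℕ∞) (1 + γ1.length)
          ((wa ++ [(Sum.inl Y, 0)]) ++ []) γ2 va := by simpa using hseq2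
      obtain ⟨vM, hva2, hseqY⟩ := phase2 G (k:ℕ∞) wa []
        (allT_of_ntCountA_eq_zero hwa) (by simp) (1 + γ1.length) γ2
        [(Sum.inl Y, 0)] va (1 + γ1.length) hseq2' le_rfl
      have hY0 : shiftA (1 + γ1.length) ([(Sum.inl Y, 0)] : AWord N T) = [(Sum.inl Y, 0)] := by
        simp [shiftA]
      rw [hY0, Nat.sub_self] at hseqY
      have hntvM : ntCountA vM = 0 := by
        rw [hva2, ntCountA_append, ntCountA_append] at hva
        omega
      obtain ⟨w1, hw1⟩ := exists_tw wa hwa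
      obtain ⟨w2, hw2⟩ := exists_tw vM hntvM
      have hw : w = w1 ++ w2 := by
        apply tw_injective (N := N)
        rw [← hstrip, hva2, List.append_nil, strip_append, hw1, hw2, tw_append]
      refine ⟨w1, w2, (((X, rhs), 0) :: γ1).map Prod.fst,
        (γ2.map (fun pj => (pj.1, pj.2 - wa.length))).map Prod.fst, hw,
        Or.inl ⟨?_, ?_, ?_⟩⟩
      · exact ⟨(((X, rhs), 0) :: γ1).map Prod.snd, wa, by simp,
          by rw [zip_fst_snd]; exact hstep0, hw1⟩
      · refine ⟨(γ2.map (fun pj => (pj.1, pj.2 - wa.length))).map Prod.snd,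
          shiftA (1 + γ1.length) vM, by simp, ?_, by rw [strip_shiftA, hw2]⟩
        rw [zip_fst_snd]
        exact hseqY
      · rw [hγ, hsplit]
        simp [List.map_map, Function.comp_def]
    · -- j = 1 : first step rewrites Y
      simp only [List.getElem?_cons_succ, List.getElem?_cons_zero] at hget
      injection hget with h0
      injection h0 with ha hb
      injection ha with ha'
      subst ha'
      cases hb
      have htail' : DFSeq G (k:ℕ∞) 1
          ((Sum.inl X, 0) :: rhs.map (fun s => (s, 1))) rest va := by
        have e : applyProdA (Y, rhs) 1 1 [(Sum.inl X, 0), (Sum.inl Y, 0)]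
            = (Sum.inl X, 0) :: rhs.map (fun s => (s, 1)) := by
          simp [applyProdA]
        rw [← e]
        exact htail
      have hinv0 : ∀ x o2, (Sum.inl x, o2) ∈ rhs.map (fun s => (s, (1:ℕ))) → 1 ≤ o2 := by
        intro x o2 hm
        obtain ⟨s, _, h2⟩ := List.mem_map.mp hm
        have := congrArg Prod.snd h2
        simp at this
        omega
      obtain ⟨γ1, γ2, wa, hsplit, hseq1, hwa, hseq2⟩ :=
        phase1L G k X rest _ va 1 htail' hinv0 hva
      have hstep0 : DFSeq G ((k-1:ℕ):ℕ∞) 0 [(Sum.inl Y, 0)]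
          (((Y, rhs), 0) :: γ1.map (fun pj => (pj.1, pj.2 - 1))) wa := by
        refine DFSeq.step (o := 0) ?_ hp rfl ?_ ?_
        · have e1 : ntCountA ([(Sum.inl Y, 0)] : AWord N T) = 1 := by simp [ntCountA, List.filter_cons]
          rw [e1]
          exact_mod_cast (by omega : 1 ≤ k - 1)
        · intro i x oi hi s oj hj
          rcases i with _ | i
          · simp at hi hj
            omega
          · simp at hi
        · have e2 : applyProdA (Y, rhs) 0 1 [(Sum.inl Y, 0)]
              = rhs.map (fun s => (s, 1)) := by simp [applyProdA]
          rw [e2]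
          exact hseq1
      have hseq2' : DFSeq G (k:ℕ∞) (1 + γ1.length)
          (([] ++ [(Sum.inl X, 0)]) ++ wa) γ2 va := by simpa using hseq2
      obtain ⟨vM, hva2, hseqX⟩ := phase2 G (k:ℕ∞) [] wa
        (by simp) (allT_of_ntCountA_eq_zero hwa) (1 + γ1.length) γ2
        [(Sum.inl X, 0)] va (1 + γ1.length) hseq2' le_rfl
      have hX0 : shiftA (1 + γ1.length) ([(Sum.inl X, 0)] : AWord N T) = [(Sum.inl X, 0)] := by
        simp [shiftA]
      rw [hX0, Nat.sub_self] at hseqX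
      have hntvM : ntCountA vM = 0 := by
        rw [hva2, ntCountA_append, ntCountA_append] at hva
        omega
      obtain ⟨w1, hw1⟩ := exists_tw vM hntvM
      obtain ⟨w2, hw2⟩ := exists_tw wa hwa
      have hw : w = w1 ++ w2 := by
        apply tw_injective (N := N)
        rw [← hstrip, hva2, List.nil_append, strip_append, hw1, hw2, tw_append]
      refine ⟨w1, w2,
        (γ2.map (fun pj => (pj.1, pj.2 - ([] : AWord N T).length))).map Prod.fst,
        (((Y, rhs), 0) :: γ1.map (fun pj => (pj.1, pj.2 - 1))).map Prod.fst, hw,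
        Or.inr ⟨?_, ?_, ?_⟩⟩
      · refine ⟨(γ2.map (fun pj => (pj.1, pj.2 - ([] : AWord N T).length))).map Prod.snd,
          shiftA (1 + γ1.length) vM, by simp, ?_, by rw [strip_shiftA, hw1]⟩
        rw [zip_fst_snd]
        exact hseqX
      · exact ⟨(((Y, rhs), 0) :: γ1.map (fun pj => (pj.1, pj.2 - 1))).map Prod.snd, wa,
          by simp, by rw [zip_fst_snd]; exact hstep0, hw2⟩
      · rw [hγ, hsplit]
        simp [List.map_map, Function.comp_def]
    · -- j ≥ 2 : impossible
      simp at hget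


end Paper
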